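/- Let Ψ, Φ, Γ, Λ, Ξ, Π : ℝ³ → ℝ³ and Υ, Σ, Ω : ℝ³ → M₃(ℝ) be continuous functions satisfying, for all a, a' ∈ ℝ³: Ψ_i(a+a') = Ψ_i(a) + Ψ_i(a'); Φ_i(a+a') = Φ_i(a) + Φ_i(a') − ε_{ink} a_n Ψ_k(a'); Γ_i(a+a') = Γ_i(a) + Γ_i(a'); Λ_i(a+a') = Λ_i(a) + Λ_i(a') + Π_m(a') a_m a_i − (1/2)(a_i δ_{lm} − a_l δ_{im}) Σ_{lm}(a'); Υ_{ij}(a+a') = Υ_{ij}(a) + Υ_{ij}(a') + ε_{ink} a_n Ω_{jk}(a'); Σ_{ij}(a+a') = Σ_{ij}(a) + Σ_{ij}(a') + 2(Π_i(a') a_j − Π_l(a') a_l δ_{ij}); Ξ_i(a+a') = Ξ_i(a) + Ξ_i(a'); Ω_{ij}(a+a') = Ω_{ij}(a) + Ω_{ij}(a'); Π_i(a+a') = Π_i(a) + Π_i(a'). Then Ψ ≡ 0, Ω ≡ 0, Π ≡ 0, and there exist constants f_{ij}, g_{ij}, h_{ij}, k_{ijk}, l_{ij}, h_i ∈ ℝ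 and h_{ijk} ∈ ℝ with h_{ijk} = h_{kji} and h_{iik} = 0, such that for all a ∈ ℝ³: Φ_i(a) = f_{ij} a_j, Γ_i(a) = g_{ij} a_j, Λ_i(a) = h_{ij} a_j + (1/4)(h_{jik} − (1/2)(h_j δ_{ik} + h_k δ_{ij})) a_j a_k, Υ_{ij}(a) = k_{ijk} a_k, Σ_{ij}(a) = (h_{ijk} + (1/2)(h_k δ_{ij} − h_i δ_{jk})) a_k, Ξ_i(a) = l_{ij} a_j. -/

import Mathlib

/-- The Levi-Civita symbol on `{1,2,3}` (indexed by `Fin 3`). -/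
def eps (i j k : Fin 3) : ℝ :=
  if (i, j, k) = (0, 1, 2) ∨ (i, j, k) = (1, 2, 0) ∨ (i, j, k) = (2, 0, 1) then 1
  else if (i, j, k) = (2, 1, 0) ∨ (i, j, k) = (1, 0, 2) ∨ (i, j, k) = (0, 2, 1) then -1
  else 0

/-- The Kronecker delta on `Fin 3`. -/
def kron (i j : Fin 3) : ℝ := if i = j then 1 else 0


lemma fin3_mk0 (h : (0:ℕ) < 3) : (⟨0, h⟩ : Fin 3) = 0 := rfl
lemma fin3_mk1 (h : (1:ℕ) < 3) : (⟨1, h⟩ : Fin 3) = 1 := rfl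
lemma fin3_mk2 (h : (2:ℕ) < 3) : (⟨2, h⟩ : Fin 3) = 2 := rfl

lemma kron_comm (i j : Fin 3) : kron i j = kron j i := by
  simp [kron, eq_comm]

lemma single_eq_kron (p i : Fin 3) : (Pi.single p 1 : Fin 3 → ℝ) i = kron i p := by
  simp [Pi.single_apply, kron]

lemma contract3 (c : ℝ) (v : Fin 3 → ℝ) (i : Fin 3) (M : Fin 3 → Fin 3 → ℝ) :
    ∑ l, ∑ m, (c * kron l m - v l * kron i m) * M l m
      = c * (∑ m, M m m) - ∑ l, v l * M l i := by
  fin_cases i <;>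
    (norm_num +decide [Fin.sum_univ_three, kron, fin3_mk0, fin3_mk1, fin3_mk2]; ring)

lemma single_contract3 (v : Fin 3 → ℝ) (p : Fin 3) :
    ∑ l, (Pi.single p 1 : Fin 3 → ℝ) l * v l = v p := by
  fin_cases p <;>
    norm_num +decide [Fin.sum_univ_three, Pi.single_apply, fin3_mk0, fin3_mk1, fin3_mk2]

lemma quad_id (S : Fin 3 → Fin 3 → Fin 3 → ℝ) (a : Fin 3 → ℝ) (i : Fin 3) :
    (1/2) * (-(1/2) * ∑ l, ∑ m, (a i * kron l m - a l * kron i m) * (∑ k, S l m k * a k))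
    = ∑ j, ∑ k, (1/4) * ((S j i k
        - (1/2) * ((∑ m, S m m k) * kron j i - (∑ m, S m m j) * kron i k))
      - (1/2) * ((∑ m, S m m j) * kron i k + (∑ m, S m m k) * kron i j)) * a j * a k := by
  fin_cases i <;>
    (norm_num +decide [Fin.sum_univ_three, kron, fin3_mk0, fin3_mk1, fin3_mk2]; ring)

lemma trace_id (S : Fin 3 → Fin 3 → Fin 3 → ℝ) (k : Fin 3) :
    ∑ i, (S i i k - (1/2) * ((∑ m, S m m k) * kron i i - (∑ m, S m m i) * kron i k)) = 0 := by
  fin_cases k <;>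
    (norm_num +decide [Fin.sum_univ_three, kron, fin3_mk0, fin3_mk1, fin3_mk2]; ring)

/-- A continuous additive function on `ℝ³` is linear. -/
lemma lin3 (F : (Fin 3 → ℝ) → ℝ) (hc : Continuous F)
    (hadd : ∀ a b, F (a + b) = F a + F b) (a : Fin 3 → ℝ) :
    F a = ∑ j, F (Pi.single j 1) * a j := by
  let φ : (Fin 3 → ℝ) →+ ℝ := AddMonoidHom.mk' F hadd
  have this := LinearMap.pi_apply_eq_sum_univ ((φ.toRealLinearMap hc) : (Fin 3 → ℝ) →ₗ[ℝ] ℝ) a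
  have hL : ∀ x, (((φ.toRealLinearMap hc) : (Fin 3 → ℝ) →ₗ[ℝ] ℝ) : (Fin 3 → ℝ) → ℝ) x = F x :=
    fun _ => rfl
  rw [hL] at this
  rw [this]
  refine Finset.sum_congr rfl fun j _ => ?_
  have hs : (Pi.single j (1:ℝ)) = fun i => if j = i then (1:ℝ) else 0 := by
    funext i; simp [Pi.single_apply, eq_comm]
  rw [smul_eq_mul, ← hL, hs, mul_comm]

/-- A matrix whose `ε`-contraction is symmetric vanishes. -/
lemma matP (P : Fin 3 → Fin 3 → ℝ)
    (h : ∀ i p q : Fin 3, ∑ n, ∑ k, eps i n k * (Pi.single p 1 : Fin 3 → ℝ) n * P k q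
      = ∑ n, ∑ k, eps i n k * (Pi.single q 1 : Fin 3 → ℝ) n * P k p) :
    ∀ i j, P i j = 0 := by
  have h1 := h 2 0 2
  have h2 := h 2 1 2
  have h3 := h 2 0 1
  have h4 := h 0 1 0
  have h5 := h 0 2 0
  have h6 := h 0 1 2
  have h7 := h 1 2 1
  have h8 := h 1 0 1
  have h9 := h 1 2 0
  norm_num +decide [Fin.sum_univ_three, eps, Pi.single_apply, Prod.ext_iff]
    at h1 h2 h3 h4 h5 h6 h7 h8 h9
  intro i j
  fin_cases i <;> fin_cases j <;> simp <;> linarith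

/-- A matrix satisfying the symmetry constraint coming from `Π` vanishes. -/
lemma matR (R : Fin 3 → Fin 3 → ℝ)
    (h : ∀ i j p q : Fin 3,
      R i q * (Pi.single p 1 : Fin 3 → ℝ) j
        - (∑ l, R l q * (Pi.single p 1 : Fin 3 → ℝ) l) * kron i j
      = R i p * (Pi.single q 1 : Fin 3 → ℝ) j
        - (∑ l, R l p * (Pi.single q 1 : Fin 3 → ℝ) l) * kron i j) :
    ∀ i q, R i q = 0 := by
  have z00 := h 0 1 1 0
  have z01 := h 0 2 2 1
  have z02 := h 0 1 1 2
  have z10 := h 1 2 2 0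
  have z11 := h 1 0 0 1
  have z12 := h 1 0 0 2
  have z20 := h 2 1 1 0
  have z21 := h 2 0 0 1
  have z22 := h 2 0 0 2
  norm_num +decide [Fin.sum_univ_three, kron, Pi.single_apply]
    at z00 z01 z02 z10 z11 z12 z20 z21 z22
  intro i q
  fin_cases i <;> fin_cases q <;> simp <;> linarith

/-- The bilinear correction term in the `Λ` cocycle equation. -/
noncomputable def Bform (Sig : (Fin 3 → ℝ) → Fin 3 → Fin 3 → ℝ) (i : Fin 3)
    (a a' : Fin 3 → ℝ) : ℝ :=
  -(1/2) * ∑ l, ∑ m, (a i * kron l m - a l * kron i m) * Sig a' l m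

lemma Bform_add_left (Sig : (Fin 3 → ℝ) → Fin 3 → Fin 3 → ℝ) (i : Fin 3) (a b c : Fin 3 → ℝ) :
    Bform Sig i (a + b) c = Bform Sig i a c + Bform Sig i b c := by
  simp only [Bform, Fin.sum_univ_three, Pi.add_apply]; ring

lemma Bform_add_right (Sig : (Fin 3 → ℝ) → Fin 3 → Fin 3 → ℝ)
    (hS : ∀ a a' : Fin 3 → ℝ, ∀ i j, Sig (a + a') i j = Sig a i j + Sig a' i j)
    (i : Fin 3) (a b c : Fin 3 → ℝ) :
    Bform Sig i a (b + c) = Bform Sig i a b + Bform Sig i a c := by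
  simp only [Bform, Fin.sum_univ_three, hS]; ring

lemma Bform_cont (Sig : (Fin 3 → ℝ) → Fin 3 → Fin 3 → ℝ) (hS : Continuous Sig) (i : Fin 3) :
    Continuous fun a => Bform Sig i a a := by
  unfold Bform
  fun_prop

/-- The restriction of the Poisson–Lie cocycle condition on the Galilei group to the
subgroup of space translations: continuous solutions of the system have the stated
polynomial form, with `Ψ ≡ 0`, `Ω ≡ 0`, `Π ≡ 0`. -/
theorem space_translation_cocycles
    (Psi Phi Gam Lam Xi Piv : (Fin 3 → ℝ) → Fin 3 → ℝ)
    (Ups Sig Om : (Fin 3 → ℝ) → Fin 3 → Fin 3 → ℝ)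
    (hPsi : Continuous Psi) (hPhi : Continuous Phi) (hGam : Continuous Gam)
    (hLam : Continuous Lam) (hXi : Continuous Xi) (hPiv : Continuous Piv)
    (hUps : Continuous Ups) (hSig : Continuous Sig) (hOm : Continuous Om)
    (e1 : ∀ a a' : Fin 3 → ℝ, ∀ i, Psi (a + a') i = Psi a i + Psi a' i)
    (e2 : ∀ a a' : Fin 3 → ℝ, ∀ i, Phi (a + a') i =
      Phi a i + Phi a' i - ∑ n, ∑ k, eps i n k * a n * Psi a' k)
    (e3 : ∀ a a' : Fin 3 → ℝ, ∀ i, Gam (a + a') i = Gam a i + Gam a' i)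
    (e4 : ∀ a a' : Fin 3 → ℝ, ∀ i, Lam (a + a') i =
      Lam a i + Lam a' i + (∑ m, Piv a' m * a m * a i)
        - (1/2) * ∑ l, ∑ m, (a i * kron l m - a l * kron i m) * Sig a' l m)
    (e5 : ∀ a a' : Fin 3 → ℝ, ∀ i j, Ups (a + a') i j =
      Ups a i j + Ups a' i j + ∑ n, ∑ k, eps i n k * a n * Om a' j k)
    (e6 : ∀ a a' : Fin 3 → ℝ, ∀ i j, Sig (a + a') i j =
      Sig a i j + Sig a' i j + 2 * (Piv a' i * a j - (∑ l, Piv a' l * a l) * kron i j))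
    (e7 : ∀ a a' : Fin 3 → ℝ, ∀ i, Xi (a + a') i = Xi a i + Xi a' i)
    (e8 : ∀ a a' : Fin 3 → ℝ, ∀ i j, Om (a + a') i j = Om a i j + Om a' i j)
    (e9 : ∀ a a' : Fin 3 → ℝ, ∀ i, Piv (a + a') i = Piv a i + Piv a' i) :
    (∀ a : Fin 3 → ℝ, ∀ i, Psi a i = 0) ∧
    (∀ a : Fin 3 → ℝ, ∀ i j, Om a i j = 0) ∧
    (∀ a : Fin 3 → ℝ, ∀ i, Piv a i = 0) ∧
    ∃ f g h l : Fin 3 → Fin 3 → ℝ, ∃ kc h3 : Fin 3 → Fin 3 → Fin 3 → ℝ,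
      ∃ hv : Fin 3 → ℝ,
      (∀ i j k, h3 i j k = h3 k j i) ∧ (∀ k, ∑ i, h3 i i k = 0) ∧
      ∀ a : Fin 3 → ℝ,
        (∀ i, Phi a i = ∑ j, f i j * a j) ∧
        (∀ i, Gam a i = ∑ j, g i j * a j) ∧
        (∀ i, Lam a i = (∑ j, h i j * a j)
          + ∑ j, ∑ k, (1/4) * (h3 j i k - (1/2) * (hv j * kron i k + hv k * kron i j))
              * a j * a k) ∧
        (∀ i j, Ups a i j = ∑ k, kc i j k * a k) ∧
        (∀ i j, Sig a i j =
          ∑ k, (h3 i j k + (1/2) * (hv k * kron i j - hv i * kron j k)) * a k) ∧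
        (∀ i, Xi a i = ∑ j, l i j * a j) := by
  -- componentwise continuity
  have cPsi : ∀ i, Continuous fun a => Psi a i := fun i => (continuous_apply i).comp hPsi
  have cPhi : ∀ i, Continuous fun a => Phi a i := fun i => (continuous_apply i).comp hPhi
  have cGam : ∀ i, Continuous fun a => Gam a i := fun i => (continuous_apply i).comp hGam
  have cLam : ∀ i, Continuous fun a => Lam a i := fun i => (continuous_apply i).comp hLam
  have cXi : ∀ i, Continuous fun a => Xi a i := fun i => (continuous_apply i).comp hXi
  have cPiv : ∀ i, Continuous fun a => Piv a i := fun i => (continuous_apply i).comp hPiv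
  have cUps : ∀ i j, Continuous fun a => Ups a i j :=
    fun i j => (continuous_apply j).comp ((continuous_apply i).comp hUps)
  have cSig : ∀ i j, Continuous fun a => Sig a i j :=
    fun i j => (continuous_apply j).comp ((continuous_apply i).comp hSig)
  have cOm : ∀ i j, Continuous fun a => Om a i j :=
    fun i j => (continuous_apply j).comp ((continuous_apply i).comp hOm)
  -- Ψ ≡ 0
  have symPsi : ∀ a a' : Fin 3 → ℝ, ∀ i,
      ∑ n, ∑ k, eps i n k * a n * Psi a' k = ∑ n, ∑ k, eps i n k * a' n * Psi a k := by
    intro a a' i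
    have t1 := e2 a a' i
    have t2 := e2 a' a i
    rw [add_comm a' a] at t2
    linarith
  have hPsingle : ∀ k q : Fin 3, Psi (Pi.single q 1) k = 0 :=
    matP (fun k q => Psi (Pi.single q 1) k)
      (fun i p q => symPsi (Pi.single p 1) (Pi.single q 1) i)
  have hPsi0 : ∀ a : Fin 3 → ℝ, ∀ i, Psi a i = 0 := by
    intro a i
    rw [lin3 (fun a => Psi a i) (cPsi i) (fun a b => e1 a b i) a]
    simp [hPsingle]
  -- Ω ≡ 0
  have symOm : ∀ a a' : Fin 3 → ℝ, ∀ i j,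
      ∑ n, ∑ k, eps i n k * a n * Om a' j k = ∑ n, ∑ k, eps i n k * a' n * Om a j k := by
    intro a a' i j
    have t1 := e5 a a' i j
    have t2 := e5 a' a i j
    rw [add_comm a' a] at t2
    linarith
  have hOsingle : ∀ j k q : Fin 3, Om (Pi.single q 1) j k = 0 := fun j =>
    matP (fun k q => Om (Pi.single q 1) j k)
      (fun i p q => symOm (Pi.single p 1) (Pi.single q 1) i j)
  have hOm0 : ∀ a : Fin 3 → ℝ, ∀ i j, Om a i j = 0 := by
    intro a i j
    rw [lin3 (fun a => Om a i j) (cOm i j) (fun a b => e8 a b i j) a]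
    simp [hOsingle]
  -- Π ≡ 0
  have symPiv : ∀ a a' : Fin 3 → ℝ, ∀ i j,
      Piv a' i * a j - (∑ l, Piv a' l * a l) * kron i j
        = Piv a i * a' j - (∑ l, Piv a l * a' l) * kron i j := by
    intro a a' i j
    have t1 := e6 a a' i j
    have t2 := e6 a' a i j
    rw [add_comm a' a] at t2
    linarith
  have hRsingle : ∀ i q : Fin 3, Piv (Pi.single q 1) i = 0 :=
    matR (fun i q => Piv (Pi.single q 1) i)
      (fun i j p q => symPiv (Pi.single p 1) (Pi.single q 1) i j)
  have hPiv0 : ∀ a : Fin 3 → ℝ, ∀ i, Piv a i = 0 := by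
    intro a i
    rw [lin3 (fun a => Piv a i) (cPiv i) (fun a b => e9 a b i) a]
    simp [hRsingle]
  -- Σ is additive, hence linear
  have hSadd : ∀ a a' : Fin 3 → ℝ, ∀ i j, Sig (a + a') i j = Sig a i j + Sig a' i j := by
    intro a a' i j
    have := e6 a a' i j
    simp only [hPiv0, zero_mul, Finset.sum_const_zero, sub_zero, mul_zero, add_zero] at this
    linarith [this]
  have Siglin : ∀ a : Fin 3 → ℝ, ∀ i j, Sig a i j = ∑ k, Sig (Pi.single k 1) i j * a k :=
    fun a i j => lin3 (fun a => Sig a i j) (cSig i j) (fun a b => hSadd a b i j) a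
  -- Λ cocycle via Bform
  have hLadd : ∀ a a' : Fin 3 → ℝ, ∀ i,
      Lam (a + a') i = Lam a i + Lam a' i + Bform Sig i a a' := by
    intro a a' i
    have t := e4 a a' i
    simp only [hPiv0, zero_mul, Finset.sum_const_zero, add_zero] at t
    unfold Bform
    linarith
  have symB : ∀ a a' : Fin 3 → ℝ, ∀ i, Bform Sig i a a' = Bform Sig i a' a := by
    intro a a' i
    have t1 := hLadd a a' i
    have t2 := hLadd a' a i
    rw [add_comm a' a] at t2
    linarith
  have Gadd : ∀ i : Fin 3, ∀ a b : Fin 3 → ℝ,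
      Lam (a + b) i - (1/2) * Bform Sig i (a + b) (a + b)
        = (Lam a i - (1/2) * Bform Sig i a a) + (Lam b i - (1/2) * Bform Sig i b b) := by
    intro i a b
    rw [hLadd, Bform_add_left, Bform_add_right Sig hSadd, Bform_add_right Sig hSadd]
    have := symB a b i
    linarith
  have Gcont : ∀ i : Fin 3, Continuous fun a => Lam a i - (1/2) * Bform Sig i a a :=
    fun i => (cLam i).sub (continuous_const.mul (Bform_cont Sig hSig i))
  have Lamlin : ∀ a : Fin 3 → ℝ, ∀ i,
      Lam a i = (∑ j, (Lam (Pi.single j 1) i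
        - (1/2) * Bform Sig i (Pi.single j 1) (Pi.single j 1)) * a j)
        + (1/2) * Bform Sig i a a := by
    intro a i
    have H := lin3 (fun a => Lam a i - (1/2) * Bform Sig i a a) (Gcont i)
      (fun a b => Gadd i a b) a
    linarith
  refine ⟨hPsi0, hOm0, hPiv0,
    fun i j => Phi (Pi.single j 1) i,
    fun i j => Gam (Pi.single j 1) i,
    fun i j => Lam (Pi.single j 1) i - (1/2) * Bform Sig i (Pi.single j 1) (Pi.single j 1),
    fun i j => Xi (Pi.single j 1) i,
    fun i j k => Ups (Pi.single k 1) i j,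
    fun i j k => Sig (Pi.single k 1) i j
      - (1/2) * ((∑ m, Sig (Pi.single k 1) m m) * kron i j
        - (∑ m, Sig (Pi.single i 1) m m) * kron j k),
    fun k => ∑ m, Sig (Pi.single k 1) m m, ?_, ?_, ?_⟩
  have symS : ∀ i p q : Fin 3,
      kron i p * (∑ m, Sig (Pi.single q 1) m m) - Sig (Pi.single q 1) p i
        = kron i q * (∑ m, Sig (Pi.single p 1) m m) - Sig (Pi.single p 1) q i := by
    intro i p q
    have key := symB (Pi.single p 1) (Pi.single q 1) i
    rw [Bform, Bform,
      contract3 ((Pi.single p 1 : Fin 3 → ℝ) i) (Pi.single p 1) i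
        (fun l m => Sig (Pi.single q 1) l m),
      contract3 ((Pi.single q 1 : Fin 3 → ℝ) i) (Pi.single q 1) i
        (fun l m => Sig (Pi.single p 1) l m),
      single_contract3, single_contract3, single_eq_kron, single_eq_kron] at key
    linarith
  · -- h3 symmetry
    intro i j k
    simp only []
    have key := symS j i k
    rw [kron_comm j i] at key
    rw [kron_comm k j, kron_comm j i]
    linarith [key]
  · -- h3 trace
    intro k
    simp only []
    exact trace_id (fun i j k => Sig (Pi.single k 1) i j) k
  · intro a
    have Phiadd : ∀ b b' : Fin 3 → ℝ, ∀ i, Phi (b + b') i = Phi b i + Phi b' i := by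
      intro b b' i
      have := e2 b b' i
      simp only [hPsi0, mul_zero, Finset.sum_const_zero, sub_zero] at this
      exact this
    have Upsadd : ∀ b b' : Fin 3 → ℝ, ∀ i j, Ups (b + b') i j = Ups b i j + Ups b' i j := by
      intro b b' i j
      have := e5 b b' i j
      simp only [hOm0, mul_zero, Finset.sum_const_zero, add_zero] at this
      exact this
    refine ⟨?_, ?_, ?_, ?_, ?_, ?_⟩
    · intro i
      simpa using lin3 (fun a => Phi a i) (cPhi i) (fun b b' => Phiadd b b' i) a
    · intro i
      simpa using lin3 (fun a => Gam a i) (cGam i) (fun b b' => e3 b b' i) a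
    · intro i
      have L := Lamlin a i
      have quad : (1/2) * Bform Sig i a a
          = ∑ j, ∑ k, (1/4) * ((Sig (Pi.single k 1) j i
              - (1/2) * ((∑ m, Sig (Pi.single k 1) m m) * kron j i
                - (∑ m, Sig (Pi.single j 1) m m) * kron i k))
            - (1/2) * ((∑ m, Sig (Pi.single j 1) m m) * kron i k
              + (∑ m, Sig (Pi.single k 1) m m) * kron i j)) * a j * a k := by
        rw [Bform]
        simp only [Siglin a]
        exact quad_id (fun l m k => Sig (Pi.single k 1) l m) a i
      simp only []
      rw [L]
      linarith [quad]
    · intro i j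
      simpa using lin3 (fun a => Ups a i j) (cUps i j) (fun b b' => Upsadd b b' i j) a
    · intro i j
      simp only []
      rw [Siglin a i j]
      exact Finset.sum_congr rfl fun k _ => by ring
    · intro i
      simpa using lin3 (fun a => Xi a i) (cXi i) (fun b b' => e7 b b' i) a
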